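/- Let X = (X_1,…,X_n) be any random vector and Y = (Y_1,…,Y_n) its vector of order statistics, so Y = f ∘ X where f : ℝ^n → ℝ^n is the sorting map. Then the σ-field generated by Y satisfies σ(Y) = X^{-1}(ℬ⁺), where ℬ⁺ := { (B ∩ Γ_0)⁺ : B ∈ ℬ(ℝ^n) } is the symmetric σ-field, i.e., the σ-field of symmetric Borel subsets of ℝ^n. -/
import Mathlib


open MeasureTheory

/-- The sorting map: rearranges the coordinates of `x : Fin n → ℝ` in nondecreasing order. -/
noncomputable def sortVec {n : ℕ} (x : Fin n → ℝ) : Fin n → ℝ :=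
  x ∘ Tuple.sort x

/-- For `B ⊆ ℝ^n`, `symmetrize B = B⁺` is the union over all permutations `π` of
the permuted copies `{(x_{π(1)},…,x_{π(n)}) : x ∈ B}`. -/
def symmetrize {n : ℕ} (B : Set (Fin n → ℝ)) : Set (Fin n → ℝ) :=
  ⋃ π : Equiv.Perm (Fin n), (fun x : Fin n → ℝ => x ∘ ⇑π) '' B

/-- `Γ₀ = {x ∈ ℝ^n : x_1 ≤ ⋯ ≤ x_n}`, the cone of nondecreasing vectors. -/
def Gamma0 (n : ℕ) : Set (Fin n → ℝ) :=
  {x | Monotone x}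

lemma sortVec_comp_perm {n : ℕ} (x : Fin n → ℝ) (π : Equiv.Perm (Fin n)) :
    sortVec (x ∘ π) = sortVec x :=
  Tuple.comp_perm_comp_sort_eq_comp_sort

lemma sortVec_eq_self {n : ℕ} {x : Fin n → ℝ} (hx : Monotone x) : sortVec x = x := by
  unfold sortVec
  rw [(Tuple.sort_eq_refl_iff_monotone).2 hx]
  rfl

lemma mem_symmetrize_iff {n : ℕ} {S : Set (Fin n → ℝ)} (hS : S ⊆ Gamma0 n)
    (x : Fin n → ℝ) : x ∈ symmetrize S ↔ sortVec x ∈ S := by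
  constructor
  · rintro ⟨_, ⟨π, rfl⟩, y, hy, rfl⟩
    rw [sortVec_comp_perm, sortVec_eq_self (hS hy)]
    exact hy
  · intro h
    exact Set.mem_iUnion.2 ⟨(Tuple.sort x)⁻¹, sortVec x, h, by
      simp [sortVec, Function.comp_assoc, Equiv.Perm.inv_def, Equiv.self_comp_symm]⟩

lemma measurableSet_Gamma0 (n : ℕ) : MeasurableSet (Gamma0 n) := by
  have : Gamma0 n = ⋂ (i : Fin n), ⋂ (j : Fin n), ⋂ (_ : i ≤ j), {x | x i ≤ x j} := by
    ext x
    simp only [Gamma0, Set.mem_setOf_eq, Set.mem_iInter]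
    exact ⟨fun h i j hij => h hij, fun h i j hij => h i j hij⟩
  rw [this]
  exact MeasurableSet.iInter fun i => MeasurableSet.iInter fun j =>
    MeasurableSet.iInter fun _ =>
      measurableSet_le (measurable_pi_apply i) (measurable_pi_apply j)

/-- For any random vector `X` with vector of order statistics `Y = sortVec ∘ X`,
the σ-field generated by `Y` equals `X⁻¹(ℬ⁺)`, the family of preimages under `X`
of the members `(B ∩ Γ₀)⁺`, `B` Borel, of the symmetric σ-field `ℬ⁺`. -/
theorem sigma_field_order_statistics_eq_preimage_symmetric
    {Ω : Type*} [MeasurableSpace Ω]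
    {n : ℕ} (X : Ω → Fin n → ℝ) (hX : Measurable X) :
    ∀ A : Set Ω,
      MeasurableSet[MeasurableSpace.comap (fun ω => sortVec (X ω)) inferInstance] A ↔
        ∃ B : Set (Fin n → ℝ), MeasurableSet B ∧ A = X ⁻¹' symmetrize (B ∩ Gamma0 n) := by
  intro A
  constructor
  · rintro ⟨C, hC, rfl⟩
    refine ⟨C, hC, ?_⟩
    ext ω
    simp only [Set.mem_preimage]
    rw [mem_symmetrize_iff Set.inter_subset_right]
    constructor
    · intro h
      exact ⟨h, Tuple.monotone_sort (X ω)⟩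
    · exact fun h => h.1
  · rintro ⟨B, hB, rfl⟩
    refine ⟨B ∩ Gamma0 n, hB.inter (measurableSet_Gamma0 n), ?_⟩
    ext ω
    simp only [Set.mem_preimage]
    rw [mem_symmetrize_iff Set.inter_subset_right]
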